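/- For every integer n ≥ 1, M_{4n} = 2n + M_{n+1}, where m_k (resp. M_k) is the minimum (resp. maximum) number of alternations among length-k factors of the Thue–Morse sequence. -/
import Mathlib


/-- The reduction of a word: replace each maximal run of identical characters
by a single character. -/
def red {α : Type*} [DecidableEq α] (w : List α) : List α :=
  w.destutter (· ≠ ·)

/-- The length-`k` factor of the infinite sequence `x` (1-indexed) starting at
position `i`. -/
def factorAt {α : Type*} (x : ℕ → α) (i k : ℕ) : List α :=
  (List.range k).map (fun j => x (i + j))

/-- The reduced factor complexity: the number of length-`n` factors of `x`,
counted up to reduced-equivalence (`red v = red w`). -/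
noncomputable def redFactorComplexity {α : Type*} [DecidableEq α]
    (x : ℕ → α) (n : ℕ) : ℕ :=
  Set.ncard { u : List α | ∃ i ≥ 1, u = red (factorAt x i n) }

/-- The Thue–Morse sequence (1-indexed): `t n` is the parity of the number of
1's in the binary expansion of `n - 1`. -/
def thueMorse (n : ℕ) : Bool :=
  decide ((Nat.digits 2 (n - 1)).sum % 2 = 1)

/-- The number of alternations (occurrences of 01 or 10) in a binary word. -/
def alt (w : List Bool) : ℕ :=
  (List.zipWith (fun a b => a != b) w w.tail).count true

/-- The minimum number of alternations among length-`k` factors of Thue–Morse. -/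
noncomputable def tmAltMin (k : ℕ) : ℕ :=
  sInf { a : ℕ | ∃ i ≥ 1, a = alt (factorAt thueMorse i k) }

/-- The maximum number of alternations among length-`k` factors of Thue–Morse. -/
noncomputable def tmAltMax (k : ℕ) : ℕ :=
  sSup { a : ℕ | ∃ i ≥ 1, a = alt (factorAt thueMorse i k) }

/-- The Thue–Morse morphism `0 → 01`, `1 → 10`. -/
def mu (w : List Bool) : List Bool :=
  w.flatMap (fun b => if b then [true, false] else [false, true])

/-- The regular paperfolding sequence (1-indexed): writing `n = n' * 2^k` with
`n'` odd, `f n = 1` iff `n' ≡ 3 (mod 4)`. -/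
def paperfold (n : ℕ) : Bool :=
  decide ((n / 2 ^ (n.factorization 2)) % 4 = 3)

/-- The reduced abelian complexity: the number of length-`n` factors of `x`,
counted up to the equivalence identifying `v` and `w` whenever `red v` is a
rearrangement of the characters of `red w`. -/
noncomputable def redAbelianComplexity {α : Type*} [DecidableEq α]
    (x : ℕ → α) (n : ℕ) : ℕ :=
  Set.ncard { m : Multiset α | ∃ i ≥ 1, m = ↑(red (factorAt x i n)) }


lemma mu_cons (a : Bool) (w : List Bool) : mu (a :: w) = a :: (!a) :: mu w := by
  cases a <;> rfl

lemma mu_append (xs ys : List Bool) : mu (xs ++ ys) = mu xs ++ mu ys :=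
  List.flatMap_append ..

lemma mu_length (w : List Bool) : (mu w).length = 2 * w.length := by
  induction w with
  | nil => rfl
  | cons a w ih => rw [mu_cons]; simp [ih]; omega

lemma alt_cons_cons (a b : Bool) (l : List Bool) :
    alt (a :: b :: l) = (if a = b then 0 else 1) + alt (b :: l) := by
  simp [alt, List.count_cons]
  cases a <;> cases b <;> simp <;> omega

lemma alt_append_cons (xs : List Bool) (y : Bool) (ys : List Bool) :
    alt (xs ++ y :: ys) = alt (xs ++ [y]) + alt (y :: ys) := by
  induction xs with
  | nil => simp [alt]
  | cons a xs ih =>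
    cases xs with
    | nil => simp [alt_cons_cons]; cases a <;> cases y <;> simp [alt]
    | cons b xs' =>
      simp only [List.cons_append] at *
      rw [alt_cons_cons, alt_cons_cons a b (xs' ++ [y]), ih]
      omega

lemma alt_append_le (xs ts : List Bool) : alt xs ≤ alt (xs ++ ts) := by
  induction xs with
  | nil => simp [alt]
  | cons a xs ih =>
    cases xs with
    | nil => simp [alt]
    | cons b xs' =>
      simp only [List.cons_append] at *
      rw [alt_cons_cons, alt_cons_cons a b (xs' ++ ts)]
      omega

lemma alt_le_length (w : List Bool) : alt w ≤ w.length := by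
  calc alt w ≤ (List.zipWith (fun a b => a != b) w w.tail).length := List.count_le_length ..
  _ ≤ w.length := by rw [List.length_zipWith]; omega

lemma alt_cons_le (a : Bool) (l : List Bool) : alt l ≤ alt (a :: l) := by
  cases l with
  | nil => simp [alt]
  | cons b l' => rw [alt_cons_cons]; omega

lemma alt_mu (w : List Bool) (hw : w ≠ []) : alt (mu w) + 1 + alt w = 2 * w.length := by
  induction w with
  | nil => simp at hw
  | cons a w ih =>
    cases w with
    | nil => cases a <;> simp [mu, alt]
    | cons b w' =>
      have ihb := ih (by simp)
      rw [mu_cons, mu_cons] at *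
      rw [alt_cons_cons, alt_cons_cons (!a) b, alt_cons_cons a b]
      simp only [List.length_cons] at *
      cases a <;> cases b <;> simp at * <;> omega

lemma alt_mu2 (w : List Bool) (hw : w ≠ []) :
    alt (mu (mu w)) = 2 * w.length + alt w := by
  have h1 := alt_mu w hw
  have h2 := alt_mu (mu w) (by cases w with | nil => simp at hw | cons a w => rw [mu_cons]; simp)
  rw [mu_length] at h2
  omega

-- front lemmas
lemma front1 (a : Bool) (l : List Bool) : alt (a :: (!a) :: l) = alt ((!a) :: l) + 1 := by
  rw [alt_cons_cons]; cases a <;> simp <;> omega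

lemma front2 (a : Bool) (l : List Bool) : alt (a :: (!a) :: (!a) :: l) = alt ((!a) :: l) + 1 := by
  rw [alt_cons_cons, alt_cons_cons]; cases a <;> simp <;> omega

lemma front3 (a : Bool) (l : List Bool) : alt (a :: (!a) :: (!a) :: a :: l) = alt (a :: l) + 2 := by
  rw [alt_cons_cons, alt_cons_cons, alt_cons_cons]; cases a <;> simp <;> omega

-- back lemmas: suffix [c,!c,!c,c] behavior
lemma back_base (z : List Bool) (c : Bool) :
    alt (z ++ [c, !c, !c, c]) = alt (z ++ [c]) + 2 := by
  have := alt_append_cons z c [!c, !c, c]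
  rw [this]
  have : alt (c :: [!c, !c, c]) = 2 := by cases c <;> decide
  omega

lemma back1 (z : List Bool) (c : Bool) :
    alt ((z ++ [c]) ++ [!c, !c, c]) = alt (z ++ [c]) + 2 := by
  rw [List.append_assoc]; exact back_base z c

lemma back2 (z : List Bool) (c : Bool) :
    alt ((z ++ [c, !c]) ++ [!c, c]) = alt (z ++ [c, !c]) + 1 := by
  have h1 : (z ++ [c, !c]) ++ [!c, c] = z ++ [c, !c, !c, c] := by simp
  have h2 : z ++ [c, !c] = z ++ c :: [!c] := rfl
  rw [h1, back_base, h2, alt_append_cons z c [!c]]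
  have : alt (c :: [!c]) = 1 := by cases c <;> decide
  omega

lemma back3 (z : List Bool) (c : Bool) :
    alt ((z ++ [c, !c, !c]) ++ [c]) = alt (z ++ [c, !c, !c]) + 1 := by
  have h1 : (z ++ [c, !c, !c]) ++ [c] = z ++ [c, !c, !c, c] := by simp
  have h2 : z ++ [c, !c, !c] = z ++ c :: [!c, !c] := rfl
  rw [h1, back_base, h2, alt_append_cons z c [!c, !c]]
  have : alt (c :: [!c, !c]) = 1 := by cases c <;> decide
  omega

def tmS (j : ℕ) : Bool := thueMorse (j + 1)

lemma tmS_def (j : ℕ) : tmS j = decide ((Nat.digits 2 j).sum % 2 = 1) := by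
  simp [tmS, thueMorse]

lemma digitsum_even (j : ℕ) :
    (Nat.digits 2 (2 * j)).sum % 2 = (Nat.digits 2 j).sum % 2 := by
  rcases Nat.eq_zero_or_pos j with h | h
  · simp [h]
  · rw [Nat.digits_def' (by norm_num : 1 < 2) (by omega)]
    simp [Nat.mul_div_cancel_left, Nat.mul_mod_right]

lemma digitsum_odd (j : ℕ) :
    (Nat.digits 2 (2 * j + 1)).sum % 2 = ((Nat.digits 2 j).sum + 1) % 2 := by
  rw [Nat.digits_def' (by norm_num : 1 < 2) (by omega)]
  have h1 : (2 * j + 1) % 2 = 1 := by omega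
  have h2 : (2 * j + 1) / 2 = j := by omega
  rw [h1, h2]
  simp [Nat.add_mod, Nat.add_comm]

lemma tmS_even (j : ℕ) : tmS (2 * j) = tmS j := by
  rw [tmS_def, tmS_def, digitsum_even]

lemma tmS_odd (j : ℕ) : tmS (2 * j + 1) = !(tmS j) := by
  rw [tmS_def, tmS_def, digitsum_odd]
  rcases Nat.mod_two_eq_zero_or_one ((Nat.digits 2 j).sum) with h | h
  · have h1 : ((Nat.digits 2 j).sum + 1) % 2 = 1 := by omega
    rw [h1, h]; decide
  · have h1 : ((Nat.digits 2 j).sum + 1) % 2 = 0 := by omega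
    rw [h1, h]; decide

lemma tmS4_0 (p : ℕ) : tmS (4 * p) = tmS p := by
  have : 4 * p = 2 * (2 * p) := by ring
  rw [this, tmS_even, tmS_even]

lemma tmS4_1 (p : ℕ) : tmS (4 * p + 1) = !(tmS p) := by
  have : 4 * p + 1 = 2 * (2 * p) + 1 := by ring
  rw [this, tmS_odd, tmS_even]

lemma tmS4_2 (p : ℕ) : tmS (4 * p + 2) = !(tmS p) := by
  have : 4 * p + 2 = 2 * (2 * p + 1) := by ring
  rw [this, tmS_even, tmS_odd]

lemma tmS4_3 (p : ℕ) : tmS (4 * p + 3) = tmS p := by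
  have : 4 * p + 3 = 2 * (2 * p + 1) + 1 := by ring
  rw [this, tmS_odd, tmS_odd, Bool.not_not]

def fac (p k : ℕ) : List Bool := (List.range k).map (fun j => tmS (p + j))

lemma fac_length (p k : ℕ) : (fac p k).length = k := by simp [fac]

lemma fac_add (p k l : ℕ) : fac p (k + l) = fac p k ++ fac (p + k) l := by
  unfold fac
  rw [List.range_add, List.map_append, List.map_map]
  congr 1
  apply List.map_congr_left
  intro j _
  simp [Function.comp]
  ring_nf

lemma fac_one (p : ℕ) : fac p 1 = [tmS p] := by simp [fac, List.range_succ]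

lemma fac_four (p : ℕ) : fac (4 * p) 4 = [tmS p, !(tmS p), !(tmS p), tmS p] := by
  have : fac (4 * p) 4 = [tmS (4*p), tmS (4*p+1), tmS (4*p+2), tmS (4*p+3)] := by
    simp [fac, List.range_succ]
  rw [this, tmS4_0, tmS4_1, tmS4_2, tmS4_3]

lemma mu2_cons (a : Bool) (w : List Bool) :
    mu (mu (a :: w)) = [a, !a, !a, a] ++ mu (mu w) := by
  rw [mu_cons]
  cases a <;> simp [mu, List.flatMap_cons]

lemma mu2_fac (p l : ℕ) : fac (4 * p) (4 * l) = mu (mu (fac p l)) := by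
  induction l generalizing p with
  | zero => simp [fac, mu]
  | succ l ih =>
    have h1 : 4 * (l + 1) = 4 + 4 * l := by ring
    have h2 : fac p (l + 1) = tmS p :: fac (p + 1) l := by
      have : l + 1 = 1 + l := by ring
      rw [this, fac_add, fac_one]; rfl
    rw [h1, fac_add, fac_four, h2, mu2_cons]
    have h3 : 4 * p + 4 = 4 * (p + 1) := by ring
    rw [h3, ih]

lemma middle_eq {α : Type*} (p1 x1 s1 p2 x2 s2 : List α)
    (h : p1 ++ x1 ++ s1 = p2 ++ x2 ++ s2) (h1 : p1.length = p2.length)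
    (h2 : x1.length = x2.length) : x1 = x2 := by
  rw [List.append_assoc, List.append_assoc] at h
  obtain ⟨-, h'⟩ := List.append_inj h h1
  exact (List.append_inj h' h2).1

lemma mu2_single (c : Bool) : mu (mu [c]) = [c, !c, !c, c] := by
  have := mu2_cons c []
  simpa [mu] using this

lemma fac_succ_right (p k : ℕ) : fac p (k + 1) = fac p k ++ [tmS (p + k)] := by
  rw [fac_add, fac_one]

lemma hexp_lemma (n p : ℕ) (hn : 1 ≤ n) :
    fac (4*p) (4*(n+1)) =
      [tmS p, !(tmS p), !(tmS p), tmS p] ++ mu (mu (fac (p+1) (n-1)))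
        ++ [tmS (p+n), !(tmS (p+n)), !(tmS (p+n)), tmS (p+n)] := by
  have hv : fac p (n+1) = tmS p :: (fac (p+1) (n-1) ++ [tmS (p+n)]) := by
    have e : n + 1 = 1 + ((n-1) + 1) := by omega
    rw [e, fac_add, fac_one, fac_succ_right]
    have e2 : p + 1 + (n - 1) = p + n := by omega
    rw [e2]
    rfl
  rw [mu2_fac, hv, mu2_cons, mu_append, mu_append, mu2_single]
  simp [List.append_assoc]

lemma keyU (n p : ℕ) :
    alt (fac (4*p) (4*(n+1))) = 2*(n+1) + alt (fac p (n+1)) := by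
  rw [mu2_fac, alt_mu2, fac_length]
  intro h
  have := fac_length p (n+1)
  rw [h] at this
  simp at this

lemma alt_pair (c : Bool) : alt [c, !c] = 1 := by cases c <;> decide
lemma alt_triple (c : Bool) : alt [c, !c, !c] = 1 := by cases c <;> decide

lemma keyr2 (n p : ℕ) (hn : 1 ≤ n) :
    alt (fac (4*p + 2) (4*n)) + 2 = alt (fac (4*p) (4*(n+1))) := by
  set a := tmS p with ha
  set c := tmS (p+n) with hc
  set M := mu (mu (fac (p+1) (n-1))) with hMdef
  have hM : M.length = 4 * (n-1) := by
    rw [hMdef, mu_length, mu_length, fac_length]; ring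
  have hexp := hexp_lemma n p hn
  have hsplit : fac (4*p) (4*(n+1)) =
      fac (4*p) 2 ++ fac (4*p+2) (4*n) ++ fac (4*p+2+4*n) 2 := by
    have e : 4*(n+1) = 2 + 4*n + 2 := by ring
    rw [e, fac_add, fac_add]
    ring_nf
  set z : List Bool := (!a) :: a :: M with hz
  have hre : [a, !a, !a, a] ++ M ++ [c, !c, !c, c]
      = [a, !a] ++ (z ++ [c, !c]) ++ [!c, c] := by simp [hz]
  have hx : fac (4*p+2) (4*n) = z ++ [c, !c] := by
    apply middle_eq (fac (4*p) 2) _ (fac (4*p+2+4*n) 2) [a, !a] _ [(!c), c]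
    · rw [← hsplit, hexp, hre]
    · rw [fac_length]; rfl
    · rw [fac_length]; simp [hz]; omega
  have e1 : alt (fac (4*p) (4*(n+1))) = alt ((!a) :: a :: (M ++ [c, !c, !c, c])) + 1 := by
    rw [hexp]
    have : [a, !a, !a, a] ++ M ++ [c, !c, !c, c]
        = a :: (!a) :: (!a) :: (a :: (M ++ [c, !c, !c, c])) := by simp
    rw [this, front2]
  have e2 : (!a) :: a :: (M ++ [c, !c, !c, c]) = z ++ [c, !c, !c, c] := by simp [hz]
  have e3 : alt (z ++ [c, !c, !c, c]) = alt (z ++ [c]) + 2 := back_base z c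
  have e4 : alt (fac (4*p+2) (4*n)) = alt (z ++ [c]) + 1 := by
    rw [hx]
    have : z ++ [c, !c] = z ++ c :: [!c] := rfl
    rw [this, alt_append_cons]
    have : alt (c :: [!c]) = 1 := alt_pair c
    omega
  rw [e1, e2, e3, e4]

lemma keyr1 (n p : ℕ) (hn : 1 ≤ n) :
    alt (fac (4*p + 1) (4*n)) + 3 = alt (fac (4*p) (4*(n+1))) := by
  set a := tmS p with ha
  set c := tmS (p+n) with hc
  set M := mu (mu (fac (p+1) (n-1))) with hMdef
  have hM : M.length = 4 * (n-1) := by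
    rw [hMdef, mu_length, mu_length, fac_length]; ring
  have hexp := hexp_lemma n p hn
  have hsplit : fac (4*p) (4*(n+1)) =
      fac (4*p) 1 ++ fac (4*p+1) (4*n) ++ fac (4*p+1+4*n) 3 := by
    have e : 4*(n+1) = 1 + 4*n + 3 := by ring
    rw [e, fac_add, fac_add]
    ring_nf
  set z : List Bool := (!a) :: (!a) :: a :: M with hz
  have hre : [a, !a, !a, a] ++ M ++ [c, !c, !c, c]
      = [a] ++ (z ++ [c]) ++ [!c, !c, c] := by simp [hz]
  have hx : fac (4*p+1) (4*n) = z ++ [c] := by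
    apply middle_eq (fac (4*p) 1) _ (fac (4*p+1+4*n) 3) [a] _ [(!c), (!c), c]
    · rw [← hsplit, hexp, hre]
    · rw [fac_length]; rfl
    · rw [fac_length]; simp [hz]; omega
  have e1 : alt (fac (4*p) (4*(n+1))) = alt ((!a) :: (!a) :: a :: (M ++ [c, !c, !c, c])) + 1 := by
    rw [hexp]
    have : [a, !a, !a, a] ++ M ++ [c, !c, !c, c]
        = a :: (!a) :: ((!a) :: a :: (M ++ [c, !c, !c, c])) := by simp
    rw [this, front1]
  have e2 : (!a) :: (!a) :: a :: (M ++ [c, !c, !c, c]) = z ++ [c, !c, !c, c] := by simp [hz]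
  have e3 : alt (z ++ [c, !c, !c, c]) = alt (z ++ [c]) + 2 := back_base z c
  rw [e1, e2, e3, hx]

lemma keyr3 (n p : ℕ) (hn : 1 ≤ n) :
    alt (fac (4*p + 3) (4*n)) + 3 = alt (fac (4*p) (4*(n+1))) := by
  set a := tmS p with ha
  set c := tmS (p+n) with hc
  set M := mu (mu (fac (p+1) (n-1))) with hMdef
  have hM : M.length = 4 * (n-1) := by
    rw [hMdef, mu_length, mu_length, fac_length]; ring
  have hexp := hexp_lemma n p hn
  have hsplit : fac (4*p) (4*(n+1)) =
      fac (4*p) 3 ++ fac (4*p+3) (4*n) ++ fac (4*p+3+4*n) 1 := by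
    have e : 4*(n+1) = 3 + 4*n + 1 := by ring
    rw [e, fac_add, fac_add]
    ring_nf
  set z : List Bool := a :: M with hz
  have hre : [a, !a, !a, a] ++ M ++ [c, !c, !c, c]
      = [a, !a, !a] ++ (z ++ [c, !c, !c]) ++ [c] := by simp [hz]
  have hx : fac (4*p+3) (4*n) = z ++ [c, !c, !c] := by
    apply middle_eq (fac (4*p) 3) _ (fac (4*p+3+4*n) 1) [a, !a, !a] _ [c]
    · rw [← hsplit, hexp, hre]
    · rw [fac_length]; rfl
    · rw [fac_length]; simp [hz]; omega
  have e1 : alt (fac (4*p) (4*(n+1))) = alt (a :: (M ++ [c, !c, !c, c])) + 2 := by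
    rw [hexp]
    have : [a, !a, !a, a] ++ M ++ [c, !c, !c, c]
        = a :: (!a) :: (!a) :: a :: (M ++ [c, !c, !c, c]) := by simp
    rw [this, front3]
  have e2 : a :: (M ++ [c, !c, !c, c]) = z ++ [c, !c, !c, c] := by simp [hz]
  have e3 : alt (z ++ [c, !c, !c, c]) = alt (z ++ [c]) + 2 := back_base z c
  have e4 : alt (fac (4*p+3) (4*n)) = alt (z ++ [c]) + 1 := by
    rw [hx]
    have : z ++ [c, !c, !c] = z ++ c :: [!c, !c] := rfl
    rw [this, alt_append_cons]
    have : alt (c :: [!c, !c]) = 1 := alt_triple c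
    omega
  rw [e1, e2, e3, e4]

lemma factorAt_eq (p k : ℕ) : factorAt thueMorse (p + 1) k = fac p k := by
  unfold factorAt fac
  apply List.map_congr_left
  intro j _
  show thueMorse (p + 1 + j) = tmS (p + j)
  rw [tmS]
  congr 1
  omega

lemma altset (k : ℕ) :
    { a : ℕ | ∃ i ≥ 1, a = alt (factorAt thueMorse i k) }
      = { a : ℕ | ∃ p, a = alt (fac p k) } := by
  ext a
  constructor
  · rintro ⟨i, hi, rfl⟩
    refine ⟨i - 1, ?_⟩
    rw [← factorAt_eq]
    congr 2
    omega
  · rintro ⟨p, rfl⟩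
    exact ⟨p + 1, by omega, (congrArg alt (factorAt_eq p k)).symm⟩

lemma S_nonempty (k : ℕ) : { a : ℕ | ∃ p, a = alt (fac p k) }.Nonempty :=
  ⟨alt (fac 0 k), 0, rfl⟩

lemma S_bdd (k : ℕ) : BddAbove { a : ℕ | ∃ p, a = alt (fac p k) } := by
  refine ⟨k, ?_⟩
  rintro a ⟨p, rfl⟩
  have := alt_le_length (fac p k)
  rw [fac_length] at this
  exact this

lemma fac_le_max (p k : ℕ) : alt (fac p k) ≤ tmAltMax k := by
  unfold tmAltMax
  rw [altset]
  exact le_csSup (S_bdd k) ⟨p, rfl⟩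

lemma max_le_of (k B : ℕ) (h : ∀ p, alt (fac p k) ≤ B) : tmAltMax k ≤ B := by
  unfold tmAltMax
  rw [altset]
  apply csSup_le (S_nonempty k)
  rintro a ⟨p, rfl⟩
  exact h p

lemma exists_max (k : ℕ) : ∃ p, tmAltMax k = alt (fac p k) := by
  unfold tmAltMax
  rw [altset]
  exact Nat.sSup_mem (S_nonempty k) (S_bdd k)


theorem stmt7 (n : ℕ) (hn : 1 ≤ n) :
    tmAltMax (4 * n) = 2 * n + tmAltMax (n + 1) := by
  apply le_antisymm
  · apply max_le_of
    intro q
    obtain ⟨p, r, hr, hq⟩ : ∃ p r, r < 4 ∧ q = 4 * p + r := ⟨q / 4, q % 4, by omega, by omega⟩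
    have hA : alt (fac p (n+1)) ≤ tmAltMax (n+1) := fac_le_max p (n+1)
    have hu := keyU n p
    subst hq
    interval_cases r
    · -- r = 0
      have h0 : alt (fac (4*p + 0) (4*n)) = 2*n + alt (fac p n) := by
        have : 4*p + 0 = 4*p := by ring
        rw [this, mu2_fac, alt_mu2, fac_length]
        intro h
        have := fac_length p n
        rw [h] at this
        simp at this
        omega
      have hmono : alt (fac p n) ≤ alt (fac p (n+1)) := by
        rw [fac_succ_right]
        exact alt_append_le _ _
      omega
    · have := keyr1 n p hn; omega
    · have := keyr2 n p hn; omega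
    · have := keyr3 n p hn; omega
  · obtain ⟨p, hp⟩ := exists_max (n + 1)
    have h2 := keyr2 n p hn
    have hu := keyU n p
    have hle : alt (fac (4*p + 2) (4*n)) ≤ tmAltMax (4*n) := fac_le_max _ _
    omega
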